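/- Let Z be a random variable on a discrete probability space with finite range 𝒵, let ρ be a random state on a finite-dimensional complex Hilbert space defined on the same probability space, and let F be a two-universal random function on 𝒵 with finite range 𝒮, chosen independently of the pair (Z, ρ). Then E_F[ D(F(Z) | ρ) ] ≤ 2^{−S₂([{Z} ⊗ ρ])}, i.e., E_F[ D(F(Z) | ρ) ] ≤ tr([{Z} ⊗ ρ]²). -/

import Mathlib

open Matrix
open scoped Kronecker ComplexOrder

noncomputable section

/-- A density operator: positive semidefinite with trace one. -/
def IsDensityOp {d : Type*} [Fintype d] [DecidableEq d] (ρ : Matrix d d ℂ) : Prop :=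
  ρ.PosSemidef ∧ ρ.trace = 1

/-- The operator absolute value `|A| = (A Aᴴ)^(1/2)`. -/
noncomputable def matAbs {d : Type*} [Fintype d] [DecidableEq d] (A : Matrix d d ℂ) :
    Matrix d d ℂ :=
  (Matrix.posSemidef_self_mul_conjTranspose A).1.eigenvectorUnitary.1 *
    diagonal ((↑) ∘ (√·) ∘ (Matrix.posSemidef_self_mul_conjTranspose A).1.eigenvalues) *
    (star (Matrix.posSemidef_self_mul_conjTranspose A).1.eigenvectorUnitary : Matrix d d ℂ)

/-- Trace distance `δ(ρ,σ) = (1/2) tr|ρ-σ|`. -/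
noncomputable def traceDist {d : Type*} [Fintype d] [DecidableEq d]
    (ρ σ : Matrix d d ℂ) : ℝ :=
  (1 / 2) * (matAbs (ρ - σ)).trace.re

/-- Squared Hilbert-Schmidt distance `Δ(ρ,σ) = tr((ρ-σ)²)`. -/
noncomputable def hsDistSq {d : Type*} [Fintype d] [DecidableEq d]
    (ρ σ : Matrix d d ℂ) : ℝ :=
  ((ρ - σ) * (ρ - σ)).trace.re

/-- Expectation of a random state. -/
noncomputable def expState {Ω d : Type*} [Fintype d]
    (P : Ω → ℝ) (ρ : Ω → Matrix d d ℂ) : Matrix d d ℂ :=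
  ∑' ω, P ω • ρ ω

/-- Probability of an event. -/
noncomputable def prEvent {Ω : Type*} (P : Ω → ℝ) (E : Set Ω) : ℝ :=
  ∑' ω, E.indicator P ω

/-- Conditional expectation `[ρ | E]` of a random state given an event. -/
noncomputable def condExpState {Ω d : Type*} [Fintype d]
    (P : Ω → ℝ) (ρ : Ω → Matrix d d ℂ) (E : Set Ω) : Matrix d d ℂ :=
  (prEvent P E)⁻¹ • ∑' ω, E.indicator (fun ω => P ω • ρ ω) ω

/-- The classical state `|x⟩⟨x|`. -/
noncomputable def classicalState {𝒳 : Type*} [Fintype 𝒳] [DecidableEq 𝒳] (x : 𝒳) :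
    Matrix 𝒳 𝒳 ℂ :=
  Matrix.single x x 1

/-- The fully mixed state on `𝒳`. -/
noncomputable def uniformState (𝒳 : Type*) [Fintype 𝒳] [DecidableEq 𝒳] : Matrix 𝒳 𝒳 ℂ :=
  (Fintype.card 𝒳 : ℂ)⁻¹ • (1 : Matrix 𝒳 𝒳 ℂ)

/-- Non-uniformity `d(X|ρ) = δ([{X} ⊗ ρ], [{U}] ⊗ [ρ])`. -/
noncomputable def nonUnif {Ω 𝒳 d : Type*} [Fintype 𝒳] [DecidableEq 𝒳]
    [Fintype d] [DecidableEq d]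
    (P : Ω → ℝ) (X : Ω → 𝒳) (ρ : Ω → Matrix d d ℂ) : ℝ :=
  traceDist (expState P (fun ω => classicalState (X ω) ⊗ₖ ρ ω))
    (uniformState 𝒳 ⊗ₖ expState P ρ)

/-- `D(X|ρ) = Δ([{X} ⊗ ρ], [{U}] ⊗ [ρ])`. -/
noncomputable def DNonUnif {Ω 𝒳 d : Type*} [Fintype 𝒳] [DecidableEq 𝒳]
    [Fintype d] [DecidableEq d]
    (P : Ω → ℝ) (X : Ω → 𝒳) (ρ : Ω → Matrix d d ℂ) : ℝ :=
  hsDistSq (expState P (fun ω => classicalState (X ω) ⊗ₖ ρ ω))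
    (uniformState 𝒳 ⊗ₖ expState P ρ)

/-- Rényi entropy of order 0: `log₂ rank ρ`. -/
noncomputable def renyiS0 {d : Type*} [Fintype d] [DecidableEq d] (ρ : Matrix d d ℂ) : ℝ :=
  Real.logb 2 (ρ.rank)

/-- Rényi entropy of order 2: `-log₂ tr(ρ²)`. -/
noncomputable def renyiS2 {d : Type*} [Fintype d] [DecidableEq d] (ρ : Matrix d d ℂ) : ℝ :=
  -Real.logb 2 ((ρ * ρ).trace.re)

/-- Maximal eigenvalue of a Hermitian matrix. -/
noncomputable def lambdaMax {d : Type*} [Fintype d] [DecidableEq d] (ρ : Matrix d d ℂ) : ℝ :=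
  if h : ρ.IsHermitian then ⨆ i, h.eigenvalues i else 0

/-- Von Neumann entropy `S(ρ) = -tr(ρ log₂ ρ)` (in bits). -/
noncomputable def vnEntropy {d : Type*} [Fintype d] [DecidableEq d] (ρ : Matrix d d ℂ) : ℝ :=
  if h : ρ.IsHermitian then -∑ i, h.eigenvalues i * Real.logb 2 (h.eigenvalues i) else 0

/-- Smooth Rényi entropy of order 0. -/
noncomputable def smoothS0 {d : Type*} [Fintype d] [DecidableEq d]
    (ε : ℝ) (ρ : Matrix d d ℂ) : ℝ :=
  sInf {x : ℝ | ∃ σ : Matrix d d ℂ,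
    IsDensityOp σ ∧ traceDist ρ σ ≤ ε ∧ x = Real.logb 2 (σ.rank)}

/-- Smooth Rényi entropy of order ∞. -/
noncomputable def smoothSinf {d : Type*} [Fintype d] [DecidableEq d]
    (ε : ℝ) (ρ : Matrix d d ℂ) : ℝ :=
  sSup {x : ℝ | ∃ σ : Matrix d d ℂ,
    IsDensityOp σ ∧ traceDist ρ σ ≤ ε ∧ x = -Real.logb 2 (lambdaMax σ)}



section PAux

variable {Ω : Type*} [Countable Ω] {d : Type*} [Fintype d] [DecidableEq d]

/-- diagonal entries of a PSD matrix are nonneg (in ComplexOrder). -/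
lemma psd_diag_nonneg {A : Matrix d d ℂ} (hA : A.PosSemidef) (i : d) : 0 ≤ A i i := by
  exact hA.diag_nonneg

lemma psd_trace_nonneg {A : Matrix d d ℂ} (hA : A.PosSemidef) : 0 ≤ A.trace :=
  Finset.sum_nonneg fun i _ => psd_diag_nonneg hA i

open scoped MatrixOrder in
lemma trace_mul_nonneg {A B : Matrix d d ℂ} (hA : A.PosSemidef) (hB : B.PosSemidef) :
    0 ≤ (A * B).trace := by
  obtain ⟨S, hS⟩ := CStarAlgebra.nonneg_iff_eq_star_mul_self.mp hA.nonneg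
  have h1 : A * B = Sᴴ * (S * B) := by
    rw [hS, mul_assoc]; rfl
  rw [h1, trace_mul_comm]
  exact psd_trace_nonneg (hB.mul_mul_conjTranspose_same S)

lemma nonneg_eq_ofReal {z : ℂ} (hz : 0 ≤ z) : z = (z.re : ℂ) ∧ 0 ≤ z.re := by
  rw [Complex.le_def] at hz
  exact ⟨Complex.ext rfl (by simp [← hz.2]), hz.1⟩

/-- diagonal entries of a density operator are real, nonneg and at most 1. -/
lemma densityOp_diag {ρ : Matrix d d ℂ} (h : IsDensityOp ρ) (i : d) :
    ρ i i = ((ρ i i).re : ℂ) ∧ 0 ≤ (ρ i i).re ∧ (ρ i i).re ≤ 1 := by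
  obtain ⟨hre, hnn⟩ := nonneg_eq_ofReal (psd_diag_nonneg h.1 i)
  refine ⟨hre, hnn, ?_⟩
  have htr : (Matrix.trace ρ).re = 1 := by rw [h.2]; simp
  have : (Matrix.trace ρ).re = ∑ j, (ρ j j).re := by
    simp [Matrix.trace, Matrix.diag, Complex.re_sum]
  rw [this] at htr
  calc (ρ i i).re ≤ ∑ j, (ρ j j).re :=
        Finset.single_le_sum (fun j _ => (nonneg_eq_ofReal (psd_diag_nonneg h.1 j)).2)
          (Finset.mem_univ i)
    _ = 1 := htr

open scoped MatrixOrder in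
/-- entries of a density operator have norm at most 1. -/
lemma densityOp_entry_bound {ρ : Matrix d d ℂ} (h : IsDensityOp ρ) (i j : d) :
    ‖ρ i j‖ ≤ 1 := by
  obtain ⟨S, hS⟩ := CStarAlgebra.nonneg_iff_eq_star_mul_self.mp h.1.nonneg
  have hrep : ρ = Sᴴ * S := hS
  have hGram : ∀ a b : d, ρ a b = ∑ k, (starRingEnd ℂ) (S k a) * S k b := by
    intro a b
    rw [hrep]
    simp [Matrix.mul_apply, Matrix.conjTranspose_apply]
  have hz : ∀ z : ℂ, ((starRingEnd ℂ) z * z).re = ‖z‖ ^ 2 := by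
    intro z
    rw [mul_comm, Complex.mul_conj]
    rw [Complex.ofReal_re, Complex.normSq_eq_norm_sq]
  have hdiag : ∀ a : d, ∑ k, ‖S k a‖ ^ 2 = (ρ a a).re := by
    intro a
    rw [hGram a a, Complex.re_sum]
    exact Finset.sum_congr rfl fun k _ => (hz (S k a)).symm
  have hCS : ‖ρ i j‖ ^ 2 ≤ (ρ i i).re * (ρ j j).re := by
    calc ‖ρ i j‖ ^ 2 ≤ (∑ k, ‖S k i‖ * ‖S k j‖) ^ 2 := by
          apply pow_le_pow_left₀ (norm_nonneg _)
          calc ‖ρ i j‖ ≤ ∑ k, ‖(starRingEnd ℂ) (S k i) * S k j‖ := by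
                rw [hGram i j]; exact norm_sum_le _ _
            _ = ∑ k, ‖S k i‖ * ‖S k j‖ := by simp [norm_mul]
      _ ≤ (∑ k, ‖S k i‖ ^ 2) * ∑ k, ‖S k j‖ ^ 2 :=
          Finset.sum_mul_sq_le_sq_mul_sq Finset.univ _ _
      _ = (ρ i i).re * (ρ j j).re := by rw [hdiag i, hdiag j]
  have h1 : ‖ρ i j‖ ^ 2 ≤ 1 := by
    calc ‖ρ i j‖ ^ 2 ≤ (ρ i i).re * (ρ j j).re := hCS
      _ ≤ 1 * 1 := mul_le_mul (densityOp_diag h i).2.2 (densityOp_diag h j).2.2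
            (densityOp_diag h j).2.1 zero_le_one
      _ = 1 := mul_one 1
  nlinarith [norm_nonneg (ρ i j)]

variable {n : Type*} [Fintype n] [DecidableEq n]

lemma rsmul_eq (r : ℝ) (M : Matrix n n ℂ) : r • M = (r : ℂ) • M := by
  ext i j
  simp [Matrix.smul_apply, Complex.real_smul]

lemma summable_smul_of_bounded {P : Ω → ℝ} (hPs : Summable P) (hP0 : ∀ ω, 0 ≤ P ω)
    {M : Ω → Matrix n n ℂ} (hM : ∀ ω i j, ‖M ω i j‖ ≤ 1) :
    Summable (fun ω => P ω • M ω) := by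
  refine Pi.summable.mpr fun i => Pi.summable.mpr fun j => ?_
  apply Summable.of_norm_bounded hPs
  intro ω
  have h1 : (P ω • M ω) i j = P ω • (M ω i j) := rfl
  rw [h1, norm_smul, Real.norm_eq_abs, abs_of_nonneg (hP0 ω)]
  calc P ω * ‖M ω i j‖ ≤ P ω * 1 := by
        exact mul_le_mul_of_nonneg_left (hM ω i j) (hP0 ω)
    _ = P ω := mul_one _

lemma trace_norm_le {G H : Matrix n n ℂ} (hG : ∀ i j, ‖G i j‖ ≤ 1)
    (hH : ∀ i j, ‖H i j‖ ≤ 1) :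
    ‖(G * H).trace‖ ≤ (Fintype.card n : ℝ) ^ 2 := by
  calc ‖(G * H).trace‖ ≤ ∑ i, ‖(G * H) i i‖ := norm_sum_le _ _
    _ ≤ ∑ _i : n, (Fintype.card n : ℝ) := by
        apply Finset.sum_le_sum
        intro i _
        calc ‖(G * H) i i‖ ≤ ∑ k, ‖G i k * H k i‖ := norm_sum_le _ _
          _ ≤ ∑ _k : n, (1 : ℝ) := by
              apply Finset.sum_le_sum
              intro k _
              rw [norm_mul]
              calc ‖G i k‖ * ‖H k i‖ ≤ 1 * 1 := by
                    exact mul_le_mul (hG i k) (hH k i) (norm_nonneg _) zero_le_one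
                _ = 1 := mul_one 1
          _ = (Fintype.card n : ℝ) := by simp
    _ = (Fintype.card n : ℝ) ^ 2 := by simp [sq]

lemma traceExpand {P : Ω → ℝ} (hPs : Summable P) (hP0 : ∀ ω, 0 ≤ P ω)
    {G H : Ω → Matrix n n ℂ} (hG : ∀ ω i j, ‖G ω i j‖ ≤ 1) (hH : ∀ ω i j, ‖H ω i j‖ ≤ 1) :
    HasSum (fun p : Ω × Ω => ((P p.1 : ℂ) * (P p.2 : ℂ)) * (G p.1 * H p.2).trace)
      ((expState P G * expState P H).trace) := by
  have SG := summable_smul_of_bounded hPs hP0 hG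
  have SH := summable_smul_of_bounded hPs hP0 hH
  have S2 : Summable (fun p : Ω × Ω => ((P p.1 : ℂ) * (P p.2 : ℂ)) * (G p.1 * H p.2).trace) := by
    apply Summable.of_norm_bounded
      (g := fun p : Ω × Ω => P p.1 * P p.2 * (Fintype.card n : ℝ) ^ 2)
      ((hPs.mul_of_nonneg hPs hP0 hP0).mul_right _)
    intro p
    rw [norm_mul, norm_mul, Complex.norm_real, Complex.norm_real,
      Real.norm_eq_abs, Real.norm_eq_abs, abs_of_nonneg (hP0 _), abs_of_nonneg (hP0 _)]
    exact mul_le_mul_of_nonneg_left (trace_norm_le (hG p.1) (hH p.2))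
      (mul_nonneg (hP0 _) (hP0 _))
  have inner : ∀ ω₁, HasSum (fun ω₂ => ((P ω₁ : ℂ) * (P ω₂ : ℂ)) * (G ω₁ * H ω₂).trace)
      ((P ω₁ : ℂ) * (G ω₁ * expState P H).trace) := by
    intro ω₁
    have h1 := ((SH.hasSum.map (AddMonoidHom.mulLeft (G ω₁))
        (Continuous.matrix_mul continuous_const continuous_id)).map
        (Matrix.traceAddMonoidHom n ℂ) (Continuous.matrix_trace continuous_id)).mul_left
        ((P ω₁ : ℂ))
    have he : (fun ω₂ => (P ω₁ : ℂ) *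
        ((Matrix.traceAddMonoidHom n ℂ) ((AddMonoidHom.mulLeft (G ω₁)) (P ω₂ • H ω₂))))
        = fun ω₂ => ((P ω₁ : ℂ) * (P ω₂ : ℂ)) * (G ω₁ * H ω₂).trace := by
      funext ω₂
      simp only [AddMonoidHom.coe_mulLeft, Matrix.traceAddMonoidHom_apply]
      rw [rsmul_eq, mul_smul_comm, Matrix.trace_smul, smul_eq_mul]
      ring
    rw [← he]
    exact h1
  have outer : HasSum (fun ω₁ => (P ω₁ : ℂ) * (G ω₁ * expState P H).trace)
      ((expState P G * expState P H).trace) := by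
    have h1 := (SG.hasSum.map (AddMonoidHom.mulRight (expState P H))
        (Continuous.matrix_mul continuous_id continuous_const)).map
        (Matrix.traceAddMonoidHom n ℂ) (Continuous.matrix_trace continuous_id)
    have he : (fun ω₁ => (Matrix.traceAddMonoidHom n ℂ)
        ((AddMonoidHom.mulRight (expState P H)) (P ω₁ • G ω₁)))
        = fun ω₁ => (P ω₁ : ℂ) * (G ω₁ * expState P H).trace := by
      funext ω₁
      simp only [AddMonoidHom.mulRight_apply, Matrix.traceAddMonoidHom_apply]
      rw [rsmul_eq, smul_mul_assoc, Matrix.trace_smul, smul_eq_mul]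
    rw [← he]
    exact h1
  have ht : (∑' p : Ω × Ω, ((P p.1 : ℂ) * (P p.2 : ℂ)) * (G p.1 * H p.2).trace)
      = (expState P G * expState P H).trace := by
    rw [Summable.tsum_prod' S2 (fun b => (inner b).summable)]
    rw [tsum_congr (fun ω₁ => (inner ω₁).tsum_eq)]
    exact outer.tsum_eq
  exact ht ▸ S2.hasSum


variable {𝒳 : Type*} [Fintype 𝒳] [DecidableEq 𝒳]

lemma cs_entry_bound (x : 𝒳) {A : Matrix d d ℂ} (hA : ∀ i j, ‖A i j‖ ≤ 1) :
    ∀ i j, ‖(classicalState x ⊗ₖ A) i j‖ ≤ 1 := by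
  rintro ⟨a, i⟩ ⟨b, j⟩
  rw [Matrix.kroneckerMap_apply, norm_mul]
  have h1 : ‖classicalState x a b‖ ≤ 1 := by
    unfold classicalState Matrix.single
    simp only [Matrix.of_apply]
    split_ifs <;> simp
  calc ‖classicalState x a b‖ * ‖A i j‖ ≤ 1 * 1 :=
        mul_le_mul h1 (hA i j) (norm_nonneg _) zero_le_one
    _ = 1 := mul_one 1

lemma unif_entry_bound {A : Matrix d d ℂ} (hA : ∀ i j, ‖A i j‖ ≤ 1) :
    ∀ i j, ‖(uniformState 𝒳 ⊗ₖ A) i j‖ ≤ 1 := by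
  rintro ⟨a, i⟩ ⟨b, j⟩
  rw [Matrix.kroneckerMap_apply, norm_mul]
  have h1 : ‖uniformState 𝒳 a b‖ ≤ 1 := by
    unfold uniformState
    rw [Matrix.smul_apply, norm_smul, norm_inv]
    rcases Nat.eq_zero_or_pos (Fintype.card 𝒳) with h | h
    · simp [h]
    · have hc : (1 : ℝ) ≤ ‖(Fintype.card 𝒳 : ℂ)‖ := by
        rw [Complex.norm_natCast]
        exact_mod_cast h
      have h2 : ‖(Fintype.card 𝒳 : ℂ)‖⁻¹ ≤ 1 := by
        rw [inv_le_one_iff₀]; right; exact hc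
      have h3 : ‖(1 : Matrix 𝒳 𝒳 ℂ) a b‖ ≤ 1 := by
        rw [Matrix.one_apply]
        split_ifs <;> simp
      calc ‖(Fintype.card 𝒳 : ℂ)‖⁻¹ * ‖(1 : Matrix 𝒳 𝒳 ℂ) a b‖ ≤ 1 * 1 :=
            mul_le_mul h2 h3 (norm_nonneg _) zero_le_one
        _ = 1 := mul_one 1
  calc ‖uniformState 𝒳 a b‖ * ‖A i j‖ ≤ 1 * 1 :=
        mul_le_mul h1 (hA i j) (norm_nonneg _) zero_le_one
    _ = 1 := mul_one 1

lemma trace_cs_cs (a b : 𝒳) (A B : Matrix d d ℂ) :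
    ((classicalState a ⊗ₖ A) * (classicalState b ⊗ₖ B)).trace
      = (if a = b then (1 : ℂ) else 0) * (A * B).trace := by
  rw [← Matrix.mul_kronecker_mul, Matrix.trace_kronecker]
  congr 1
  unfold classicalState
  by_cases h : a = b
  · subst h
    rw [Matrix.single_mul_single_same, Matrix.trace_single_eq_same]
    simp
  · have hm : Matrix.single a a (1:ℂ) * Matrix.single b b (1:ℂ) = 0 := by simp [h]
    rw [hm, Matrix.trace_zero]
    simp [h]

lemma trace_cs_unif (a : 𝒳) (A B : Matrix d d ℂ) :
    ((classicalState a ⊗ₖ A) * (uniformState 𝒳 ⊗ₖ B)).trace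
      = (Fintype.card 𝒳 : ℂ)⁻¹ * (A * B).trace := by
  rw [← Matrix.mul_kronecker_mul, Matrix.trace_kronecker]
  congr 1
  unfold uniformState classicalState
  rw [Matrix.mul_smul, mul_one, Matrix.trace_smul, Matrix.trace_single_eq_same]
  simp

lemma trace_unif_cs (b : 𝒳) (A B : Matrix d d ℂ) :
    ((uniformState 𝒳 ⊗ₖ A) * (classicalState b ⊗ₖ B)).trace
      = (Fintype.card 𝒳 : ℂ)⁻¹ * (A * B).trace := by
  rw [← Matrix.mul_kronecker_mul, Matrix.trace_kronecker]
  congr 1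
  unfold uniformState classicalState
  rw [Matrix.smul_mul, one_mul, Matrix.trace_smul, Matrix.trace_single_eq_same]
  simp

lemma trace_unif_unif (A B : Matrix d d ℂ) :
    ((uniformState 𝒳 ⊗ₖ A) * (uniformState 𝒳 ⊗ₖ B)).trace
      = (Fintype.card 𝒳 : ℂ)⁻¹ * (A * B).trace := by
  rw [← Matrix.mul_kronecker_mul, Matrix.trace_kronecker]
  congr 1
  unfold uniformState
  rw [Matrix.smul_mul, Matrix.mul_smul, one_mul, Matrix.trace_smul, Matrix.trace_smul,
    Matrix.trace_one]
  rcases Nat.eq_zero_or_pos (Fintype.card 𝒳) with h | h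
  · simp [h]
  · have hc : (Fintype.card 𝒳 : ℂ) ≠ 0 := by
      exact_mod_cast h.ne'
    simp only [smul_eq_mul]
    field_simp

/-- the Kronecker product with a fixed matrix on the left, as an `AddMonoidHom`. -/
def kronLeftHom (U : Matrix 𝒳 𝒳 ℂ) : Matrix d d ℂ →+ Matrix (𝒳 × d) (𝒳 × d) ℂ where
  toFun M := U ⊗ₖ M
  map_zero' := Matrix.kroneckerMap_zero_right _ (fun a => mul_zero a) U
  map_add' M N := Matrix.kroneckerMap_add_right _ (fun a b c => mul_add a b c) U M N

lemma kronLeftHom_continuous (U : Matrix 𝒳 𝒳 ℂ) : Continuous (kronLeftHom (d := d) U) := by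
  apply continuous_matrix
  rintro ⟨a, i⟩ ⟨b, j⟩
  exact continuous_const.mul (Continuous.matrix_elem continuous_id i j)

lemma unif_kron_expState {P : Ω → ℝ} {ρ : Ω → Matrix d d ℂ}
    (h : Summable (fun ω => P ω • ρ ω)) :
    uniformState 𝒳 ⊗ₖ expState P ρ = expState P (fun ω => uniformState 𝒳 ⊗ₖ ρ ω) := by
  have h1 := (h.hasSum.map (kronLeftHom (uniformState 𝒳)) (kronLeftHom_continuous _)).tsum_eq
  have he : (fun ω => (kronLeftHom (𝒳 := 𝒳) (uniformState 𝒳)) (P ω • ρ ω))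
      = fun ω => P ω • (uniformState 𝒳 ⊗ₖ ρ ω) := by
    funext ω
    show uniformState 𝒳 ⊗ₖ (P ω • ρ ω) = P ω • (uniformState 𝒳 ⊗ₖ ρ ω)
    ext ⟨a, i⟩ ⟨b, j⟩
    simp only [Matrix.kroneckerMap_apply, Matrix.smul_apply, Complex.real_smul]
    ring
  rw [show (⇑(kronLeftHom (𝒳 := 𝒳) (uniformState 𝒳)) ∘ fun ω => P ω • ρ ω)
    = fun ω => P ω • (uniformState 𝒳 ⊗ₖ ρ ω) from he] at h1
  exact h1.symm


lemma key_trace {P : Ω → ℝ} {ρ : Ω → Matrix d d ℂ}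
    (hPs : Summable P) (hP0 : ∀ ω, 0 ≤ P ω) (hρ : ∀ ω, IsDensityOp (ρ ω)) (L : Ω → 𝒳) :
    HasSum (fun p : Ω × Ω => P p.1 * P p.2 * (ρ p.1 * ρ p.2).trace.re *
        (if L p.1 = L p.2 then (1 : ℝ) else 0))
      ((expState P (fun ω => classicalState (L ω) ⊗ₖ ρ ω) *
        expState P (fun ω => classicalState (L ω) ⊗ₖ ρ ω)).trace.re) := by
  have hb : ∀ ω i j, ‖(classicalState (L ω) ⊗ₖ ρ ω) i j‖ ≤ 1 :=
    fun ω => cs_entry_bound (L ω) (densityOp_entry_bound (hρ ω))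
  have h := traceExpand hPs hP0 hb hb
  have he : (fun p : Ω × Ω => ((P p.1 : ℂ) * (P p.2 : ℂ)) *
      ((classicalState (L p.1) ⊗ₖ ρ p.1) * (classicalState (L p.2) ⊗ₖ ρ p.2)).trace)
      = fun p : Ω × Ω => ((P p.1 * P p.2 * (ρ p.1 * ρ p.2).trace.re *
        (if L p.1 = L p.2 then (1 : ℝ) else 0) : ℝ) : ℂ) := by
    funext p
    rw [trace_cs_cs]
    obtain ⟨hr, -⟩ := nonneg_eq_ofReal (trace_mul_nonneg (hρ p.1).1 (hρ p.2).1)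
    rw [hr]
    by_cases hLp : L p.1 = L p.2 <;> simp [hLp] <;> push_cast <;> ring
  rw [he] at h
  have h2 := Complex.hasSum_re h
  simpa using h2

lemma key_D {P : Ω → ℝ} {ρ : Ω → Matrix d d ℂ}
    (hPs : Summable P) (hP0 : ∀ ω, 0 ≤ P ω) (hρ : ∀ ω, IsDensityOp (ρ ω)) (L : Ω → 𝒳) :
    HasSum (fun p : Ω × Ω => P p.1 * P p.2 * (ρ p.1 * ρ p.2).trace.re *
        ((if L p.1 = L p.2 then (1 : ℝ) else 0) - (Fintype.card 𝒳 : ℝ)⁻¹))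
      (DNonUnif P L ρ) := by
  have hbρ : ∀ ω i j, ‖ρ ω i j‖ ≤ 1 := fun ω => densityOp_entry_bound (hρ ω)
  have hbM : ∀ ω i j, ‖(classicalState (L ω) ⊗ₖ ρ ω) i j‖ ≤ 1 :=
    fun ω => cs_entry_bound (L ω) (hbρ ω)
  have hbU : ∀ ω i j, ‖((uniformState 𝒳 ⊗ₖ ρ ω) : Matrix (𝒳 × d) (𝒳 × d) ℂ) i j‖ ≤ 1 :=
    fun ω => unif_entry_bound (hbρ ω)
  have hρs : Summable (fun ω => P ω • ρ ω) := summable_smul_of_bounded hPs hP0 hbρ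
  have hAA := traceExpand hPs hP0 hbM hbM
  have hAB := traceExpand hPs hP0 hbM hbU
  have hBA := traceExpand hPs hP0 hbU hbM
  have hBB := traceExpand hPs hP0 hbU hbU
  have hcomb := ((hAA.sub hAB).sub hBA).add hBB
  have he : (fun p : Ω × Ω =>
      ((P p.1 : ℂ) * (P p.2 : ℂ)) *
        ((classicalState (L p.1) ⊗ₖ ρ p.1) * (classicalState (L p.2) ⊗ₖ ρ p.2)).trace
      - ((P p.1 : ℂ) * (P p.2 : ℂ)) *
        ((classicalState (L p.1) ⊗ₖ ρ p.1) * (uniformState 𝒳 ⊗ₖ ρ p.2)).trace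
      - ((P p.1 : ℂ) * (P p.2 : ℂ)) *
        ((uniformState 𝒳 ⊗ₖ ρ p.1) * (classicalState (L p.2) ⊗ₖ ρ p.2)).trace
      + ((P p.1 : ℂ) * (P p.2 : ℂ)) *
        ((uniformState 𝒳 ⊗ₖ ρ p.1) * (uniformState 𝒳 ⊗ₖ ρ p.2)).trace)
      = fun p : Ω × Ω => ((P p.1 * P p.2 * (ρ p.1 * ρ p.2).trace.re *
        ((if L p.1 = L p.2 then (1 : ℝ) else 0) - (Fintype.card 𝒳 : ℝ)⁻¹) : ℝ) : ℂ) := by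
    funext p
    rw [trace_cs_cs, trace_cs_unif, trace_unif_cs, trace_unif_unif]
    obtain ⟨hr, -⟩ := nonneg_eq_ofReal (trace_mul_nonneg (hρ p.1).1 (hρ p.2).1)
    rw [hr]
    have hcard : ((Fintype.card 𝒳 : ℂ))⁻¹ = (((Fintype.card 𝒳 : ℝ))⁻¹ : ℂ) := by push_cast; ring
    rw [hcard]
    by_cases hLp : L p.1 = L p.2 <;> simp [hLp] <;> push_cast <;> ring
  rw [he] at hcomb
  have h2 := Complex.hasSum_re hcomb
  unfold DNonUnif hsDistSq
  rw [unif_kron_expState hρs]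
  have hsub : ((expState P (fun ω => classicalState (L ω) ⊗ₖ ρ ω)
        - expState P (fun ω => uniformState 𝒳 ⊗ₖ ρ ω)) *
      (expState P (fun ω => classicalState (L ω) ⊗ₖ ρ ω)
        - expState P (fun ω => uniformState 𝒳 ⊗ₖ ρ ω))).trace
      = (expState P (fun ω => classicalState (L ω) ⊗ₖ ρ ω) *
          expState P (fun ω => classicalState (L ω) ⊗ₖ ρ ω)).trace
        - (expState P (fun ω => classicalState (L ω) ⊗ₖ ρ ω) *
          expState P (fun ω => uniformState 𝒳 ⊗ₖ ρ ω)).trace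
        - (expState P (fun ω => uniformState 𝒳 ⊗ₖ ρ ω) *
          expState P (fun ω => classicalState (L ω) ⊗ₖ ρ ω)).trace
        + (expState P (fun ω => uniformState 𝒳 ⊗ₖ ρ ω) *
          expState P (fun ω => uniformState 𝒳 ⊗ₖ ρ ω)).trace := by
    rw [sub_mul, mul_sub, mul_sub]
    rw [Matrix.trace_sub, Matrix.trace_sub, Matrix.trace_sub]
    ring
  rw [hsub]
  simpa using h2


lemma trace_sq_pos {ρ : Matrix d d ℂ} (h : IsDensityOp ρ) : 0 < (ρ * ρ).trace.re := by
  have hform : (ρ * ρ).trace.re = ∑ i, ∑ j, Complex.normSq (ρ i j) := by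
    unfold Matrix.trace
    rw [Complex.re_sum]
    apply Finset.sum_congr rfl
    intro i _
    rw [Matrix.diag_apply, Matrix.mul_apply, Complex.re_sum]
    apply Finset.sum_congr rfl
    intro j _
    have hherm : ρ j i = (starRingEnd ℂ) (ρ i j) := by
      conv_lhs => rw [← h.1.1]
      simp [Matrix.conjTranspose_apply]
    rw [hherm, Complex.mul_conj]
    simp
  rw [hform]
  obtain ⟨i, -, hi⟩ : ∃ i ∈ Finset.univ, ρ i i ≠ 0 := by
    apply Finset.exists_ne_zero_of_sum_ne_zero
    show ∑ i, ρ i i ≠ 0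
    have : ∑ i, ρ i i = ρ.trace := rfl
    rw [this, h.2]
    norm_num
  calc (0 : ℝ) < Complex.normSq (ρ i i) := Complex.normSq_pos.mpr hi
    _ ≤ ∑ j, Complex.normSq (ρ i j) :=
        Finset.single_le_sum (fun j _ => Complex.normSq_nonneg _) (Finset.mem_univ i)
    _ ≤ ∑ i, ∑ j, Complex.normSq (ρ i j) :=
        Finset.single_le_sum
          (fun a _ => Finset.sum_nonneg fun j _ => Complex.normSq_nonneg _)
          (Finset.mem_univ i)


end PAux

/-- **Lemma 8.** `E_F[D(F(Z)|ρ)] ≤ 2^{-S₂([{Z} ⊗ ρ])} = tr([{Z} ⊗ ρ]²)`. -/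
theorem stmt_9 {Ω Ω' 𝒵 𝒮 d : Type*} [Countable Ω] [Countable Ω']
    [Fintype 𝒵] [DecidableEq 𝒵] [Fintype 𝒮] [DecidableEq 𝒮]
    [Fintype d] [DecidableEq d]
    (P : Ω → ℝ) (hP : ∀ ω, 0 ≤ P ω) (hP1 : ∑' ω, P ω = 1)
    (Q : Ω' → ℝ) (hQ : ∀ ω', 0 ≤ Q ω') (hQ1 : ∑' ω', Q ω' = 1)
    (Z : Ω → 𝒵) (ρ : Ω → Matrix d d ℂ) (hρ : ∀ ω, IsDensityOp (ρ ω))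
    (F : Ω' → 𝒵 → 𝒮)
    (hF : ∀ z z' : 𝒵, z ≠ z' →
      prEvent Q {ω' | F ω' z = F ω' z'} ≤ 1 / (Fintype.card 𝒮 : ℝ)) :
    (∑' ω', Q ω' * DNonUnif P (fun ω => F ω' (Z ω)) ρ)
        ≤ (2 : ℝ) ^ (-(renyiS2 (expState P (fun ω => classicalState (Z ω) ⊗ₖ ρ ω)))) ∧
    (∑' ω', Q ω' * DNonUnif P (fun ω => F ω' (Z ω)) ρ)
        ≤ (expState P (fun ω => classicalState (Z ω) ⊗ₖ ρ ω) *
            expState P (fun ω => classicalState (Z ω) ⊗ₖ ρ ω)).trace.re := by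
  classical
  have hPs : Summable P := by
    by_contra hc
    rw [tsum_eq_zero_of_not_summable hc] at hP1
    exact one_ne_zero hP1.symm
  have hQs : Summable Q := by
    by_contra hc
    rw [tsum_eq_zero_of_not_summable hc] at hQ1
    exact one_ne_zero hQ1.symm
  have hbρ : ∀ ω i j, ‖ρ ω i j‖ ≤ 1 := fun ω => densityOp_entry_bound (hρ ω)
  have ht0 : ∀ p : Ω × Ω, (0:ℝ) ≤ (ρ p.1 * ρ p.2).trace.re :=
    fun p => (nonneg_eq_ofReal (trace_mul_nonneg (hρ p.1).1 (hρ p.2).1)).2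
  have hw0 : ∀ p : Ω × Ω, (0:ℝ) ≤ P p.1 * P p.2 * (ρ p.1 * ρ p.2).trace.re :=
    fun p => mul_nonneg (mul_nonneg (hP p.1) (hP p.2)) (ht0 p)
  have hχ0 : ∀ (c : Prop) [Decidable c], (0:ℝ) ≤ (if c then (1:ℝ) else 0) := by
    intro c _; split_ifs <;> norm_num
  have hχ1 : ∀ (c : Prop) [Decidable c], (if c then (1:ℝ) else 0) ≤ 1 := by
    intro c _; split_ifs <;> norm_num
  have htb : ∀ p : Ω × Ω, (ρ p.1 * ρ p.2).trace.re ≤ (Fintype.card d : ℝ) ^ 2 := by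
    intro p
    calc (ρ p.1 * ρ p.2).trace.re ≤ |(ρ p.1 * ρ p.2).trace.re| := le_abs_self _
      _ ≤ ‖(ρ p.1 * ρ p.2).trace‖ := Complex.abs_re_le_norm _
      _ ≤ (Fintype.card d : ℝ) ^ 2 := trace_norm_le (hbρ p.1) (hbρ p.2)
  have hws : Summable (fun p : Ω × Ω => P p.1 * P p.2 * (ρ p.1 * ρ p.2).trace.re) := by
    apply Summable.of_nonneg_of_le hw0 (fun p => ?_)
      ((hPs.mul_of_nonneg hPs hP hP).mul_right ((Fintype.card d : ℝ) ^ 2))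
    exact mul_le_mul_of_nonneg_left (htb p) (mul_nonneg (hP p.1) (hP p.2))
  have hKZ := key_trace hPs hP hρ Z
  have hs0 : (0:ℝ) ≤ (Fintype.card 𝒮 : ℝ)⁻¹ := inv_nonneg.mpr (Nat.cast_nonneg _)
  have hwχs : ∀ ω' : Ω', Summable (fun p : Ω × Ω =>
      P p.1 * P p.2 * (ρ p.1 * ρ p.2).trace.re *
        (if F ω' (Z p.1) = F ω' (Z p.2) then (1:ℝ) else 0)) := by
    intro ω'
    apply Summable.of_nonneg_of_le
      (fun p => mul_nonneg (hw0 p) (hχ0 _)) (fun p => ?_) hws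
    exact mul_le_of_le_one_right (hw0 p) (hχ1 _)
  have hD : ∀ ω' : Ω', DNonUnif P (fun ω => F ω' (Z ω)) ρ
      = (∑' p : Ω × Ω, P p.1 * P p.2 * (ρ p.1 * ρ p.2).trace.re *
          (if F ω' (Z p.1) = F ω' (Z p.2) then (1:ℝ) else 0))
        - (Fintype.card 𝒮 : ℝ)⁻¹ *
          ∑' p : Ω × Ω, P p.1 * P p.2 * (ρ p.1 * ρ p.2).trace.re := by
    intro ω'
    have h1 := key_D hPs hP hρ (fun ω => F ω' (Z ω))
    have h2 := (hwχs ω').hasSum.sub (hws.hasSum.mul_right ((Fintype.card 𝒮 : ℝ)⁻¹))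
    have he : (fun p : Ω × Ω => P p.1 * P p.2 * (ρ p.1 * ρ p.2).trace.re *
          (if F ω' (Z p.1) = F ω' (Z p.2) then (1:ℝ) else 0)
        - P p.1 * P p.2 * (ρ p.1 * ρ p.2).trace.re * (Fintype.card 𝒮 : ℝ)⁻¹)
        = fun p : Ω × Ω => P p.1 * P p.2 * (ρ p.1 * ρ p.2).trace.re *
          ((if F ω' (Z p.1) = F ω' (Z p.2) then (1:ℝ) else 0)
            - (Fintype.card 𝒮 : ℝ)⁻¹) := by
      funext p; ring
    rw [← he] at h1
    rw [h1.unique h2]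
    ring
  have hpr0 : ∀ (E : Set Ω'), 0 ≤ prEvent Q E := by
    intro E; unfold prEvent
    exact tsum_nonneg fun ω' => Set.indicator_nonneg (fun x _ => hQ x) ω'
  have hpr1 : ∀ (E : Set Ω'), prEvent Q E ≤ 1 := by
    intro E; unfold prEvent
    calc (∑' ω', E.indicator Q ω') ≤ ∑' ω', Q ω' :=
          Summable.tsum_le_tsum (fun ω' => Set.indicator_le_self' (fun x _ => hQ x) ω')
            (hQs.indicator E) hQs
      _ = 1 := hQ1
  have hTs : Summable (fun ω' : Ω' => Q ω' * ∑' p : Ω × Ω,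
      P p.1 * P p.2 * (ρ p.1 * ρ p.2).trace.re *
        (if F ω' (Z p.1) = F ω' (Z p.2) then (1:ℝ) else 0)) := by
    apply Summable.of_nonneg_of_le
      (fun ω' => mul_nonneg (hQ ω') (tsum_nonneg fun p => mul_nonneg (hw0 p) (hχ0 _)))
      (fun ω' => ?_)
      (hQs.mul_right (∑' p : Ω × Ω, P p.1 * P p.2 * (ρ p.1 * ρ p.2).trace.re))
    apply mul_le_mul_of_nonneg_left ?_ (hQ ω')
    exact Summable.tsum_le_tsum (fun p => mul_le_of_le_one_right (hw0 p) (hχ1 _)) (hwχs ω') hws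
  have hu : Summable (Function.uncurry (fun (ω' : Ω') (p : Ω × Ω) =>
      Q ω' * (P p.1 * P p.2 * (ρ p.1 * ρ p.2).trace.re *
        (if F ω' (Z p.1) = F ω' (Z p.2) then (1:ℝ) else 0)))) := by
    apply Summable.of_nonneg_of_le (fun q => ?_) (fun q => ?_)
      (hQs.mul_of_nonneg hws hQ hw0)
    · exact mul_nonneg (hQ _) (mul_nonneg (hw0 _) (hχ0 _))
    · exact mul_le_mul_of_nonneg_left (mul_le_of_le_one_right (hw0 _) (hχ1 _)) (hQ _)
  have hswap : (∑' (ω' : Ω'), Q ω' * ∑' p : Ω × Ω,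
        P p.1 * P p.2 * (ρ p.1 * ρ p.2).trace.re *
          (if F ω' (Z p.1) = F ω' (Z p.2) then (1:ℝ) else 0))
      = ∑' p : Ω × Ω, (P p.1 * P p.2 * (ρ p.1 * ρ p.2).trace.re) *
          prEvent Q {ω' | F ω' (Z p.1) = F ω' (Z p.2)} := by
    have h1 : (∑' (ω' : Ω'), Q ω' * ∑' p : Ω × Ω,
          P p.1 * P p.2 * (ρ p.1 * ρ p.2).trace.re *
            (if F ω' (Z p.1) = F ω' (Z p.2) then (1:ℝ) else 0))
        = ∑' (ω' : Ω') (p : Ω × Ω), Q ω' *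
            (P p.1 * P p.2 * (ρ p.1 * ρ p.2).trace.re *
              (if F ω' (Z p.1) = F ω' (Z p.2) then (1:ℝ) else 0)) :=
      tsum_congr fun ω' => (tsum_mul_left).symm
    rw [h1]
    rw [← Summable.tsum_comm' hu
      (fun ω' => (hwχs ω').mul_left (Q ω'))
      (fun p => ?_)]
    · apply tsum_congr
      intro p
      have h2 : (fun ω' : Ω' => Q ω' *
          (P p.1 * P p.2 * (ρ p.1 * ρ p.2).trace.re *
            (if F ω' (Z p.1) = F ω' (Z p.2) then (1:ℝ) else 0)))
          = fun ω' : Ω' => (P p.1 * P p.2 * (ρ p.1 * ρ p.2).trace.re) *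
            ({ω'' : Ω' | F ω'' (Z p.1) = F ω'' (Z p.2)}.indicator Q ω') := by
        funext ω'
        rw [Set.indicator_apply]
        simp only [Set.mem_setOf_eq]
        split_ifs <;> ring
      rw [h2, tsum_mul_left]
      rfl
    · apply Summable.of_nonneg_of_le
        (fun ω' => mul_nonneg (hQ _) (mul_nonneg (hw0 _) (hχ0 _)))
        (fun ω' => ?_)
        (hQs.mul_right (P p.1 * P p.2 * (ρ p.1 * ρ p.2).trace.re))
      exact mul_le_mul_of_nonneg_left (mul_le_of_le_one_right (hw0 _) (hχ1 _)) (hQ _)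
  have main : (∑' ω', Q ω' * DNonUnif P (fun ω => F ω' (Z ω)) ρ)
      ≤ (expState P (fun ω => classicalState (Z ω) ⊗ₖ ρ ω) *
          expState P (fun ω => classicalState (Z ω) ⊗ₖ ρ ω)).trace.re := by
    calc (∑' ω', Q ω' * DNonUnif P (fun ω => F ω' (Z ω)) ρ)
        = ∑' ω' : Ω', (Q ω' * (∑' p : Ω × Ω,
              P p.1 * P p.2 * (ρ p.1 * ρ p.2).trace.re *
                (if F ω' (Z p.1) = F ω' (Z p.2) then (1:ℝ) else 0))
            - Q ω' * ((Fintype.card 𝒮 : ℝ)⁻¹ *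
              ∑' p : Ω × Ω, P p.1 * P p.2 * (ρ p.1 * ρ p.2).trace.re)) := by
          apply tsum_congr
          intro ω'
          rw [hD ω']
          ring
      _ = (∑' ω' : Ω', Q ω' * (∑' p : Ω × Ω,
              P p.1 * P p.2 * (ρ p.1 * ρ p.2).trace.re *
                (if F ω' (Z p.1) = F ω' (Z p.2) then (1:ℝ) else 0)))
          - ∑' ω' : Ω', Q ω' * ((Fintype.card 𝒮 : ℝ)⁻¹ *
              ∑' p : Ω × Ω, P p.1 * P p.2 * (ρ p.1 * ρ p.2).trace.re) :=
          Summable.tsum_sub hTs (hQs.mul_right _)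
      _ = (∑' p : Ω × Ω, (P p.1 * P p.2 * (ρ p.1 * ρ p.2).trace.re) *
              prEvent Q {ω' | F ω' (Z p.1) = F ω' (Z p.2)})
          - (Fintype.card 𝒮 : ℝ)⁻¹ *
              ∑' p : Ω × Ω, P p.1 * P p.2 * (ρ p.1 * ρ p.2).trace.re := by
          rw [hswap, tsum_mul_right, hQ1, one_mul]
      _ ≤ (∑' p : Ω × Ω, (P p.1 * P p.2 * (ρ p.1 * ρ p.2).trace.re *
              (if Z p.1 = Z p.2 then (1:ℝ) else 0)
            + P p.1 * P p.2 * (ρ p.1 * ρ p.2).trace.re * (Fintype.card 𝒮 : ℝ)⁻¹))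
          - (Fintype.card 𝒮 : ℝ)⁻¹ *
              ∑' p : Ω × Ω, P p.1 * P p.2 * (ρ p.1 * ρ p.2).trace.re := by
          apply sub_le_sub_right
          have hpoint : ∀ p : Ω × Ω,
              (P p.1 * P p.2 * (ρ p.1 * ρ p.2).trace.re) *
                prEvent Q {ω' | F ω' (Z p.1) = F ω' (Z p.2)}
              ≤ P p.1 * P p.2 * (ρ p.1 * ρ p.2).trace.re *
                  (if Z p.1 = Z p.2 then (1:ℝ) else 0)
                + P p.1 * P p.2 * (ρ p.1 * ρ p.2).trace.re * (Fintype.card 𝒮 : ℝ)⁻¹ := by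
            intro p
            by_cases hz : Z p.1 = Z p.2
            · have h3 : prEvent Q {ω' | F ω' (Z p.1) = F ω' (Z p.2)} ≤ 1 := hpr1 _
              have h4 := mul_le_mul_of_nonneg_left h3 (hw0 p)
              rw [if_pos hz]
              nlinarith [hw0 p, hs0]
            · have h3 : prEvent Q {ω' | F ω' (Z p.1) = F ω' (Z p.2)}
                  ≤ (Fintype.card 𝒮 : ℝ)⁻¹ := by
                have := hF (Z p.1) (Z p.2) hz
                rwa [one_div] at this
              have h4 := mul_le_mul_of_nonneg_left h3 (hw0 p)
              rw [if_neg hz]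
              nlinarith [hw0 p]
          have hsl : Summable (fun p : Ω × Ω =>
              (P p.1 * P p.2 * (ρ p.1 * ρ p.2).trace.re) *
                prEvent Q {ω' | F ω' (Z p.1) = F ω' (Z p.2)}) := by
            apply Summable.of_nonneg_of_le
              (fun p => mul_nonneg (hw0 p) (hpr0 _)) (fun p => ?_) hws
            exact mul_le_of_le_one_right (hw0 p) (hpr1 _)
          exact Summable.tsum_le_tsum hpoint hsl (hKZ.summable.add (hws.mul_right _))
      _ = (expState P (fun ω => classicalState (Z ω) ⊗ₖ ρ ω) *
            expState P (fun ω => classicalState (Z ω) ⊗ₖ ρ ω)).trace.re := by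
          rw [(hKZ.add (hws.hasSum.mul_right _)).tsum_eq]
          ring
  refine ⟨?_, main⟩
  -- part 1: rewrite the Rényi-2 expression
  have hXpos : 0 < (expState P (fun ω => classicalState (Z ω) ⊗ₖ ρ ω) *
      expState P (fun ω => classicalState (Z ω) ⊗ₖ ρ ω)).trace.re := by
    obtain ⟨ω₀, hω₀⟩ : ∃ ω, 0 < P ω := by
      by_contra hc
      push_neg at hc
      have hz : ∀ ω, P ω = 0 := fun ω => le_antisymm (hc ω) (hP ω)
      have h0 : (∑' ω, P ω) = 0 := by simp [hz]
      rw [hP1] at h0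
      exact one_ne_zero h0
    have hterm := Summable.le_tsum hKZ.summable (ω₀, ω₀)
      (fun p _ => mul_nonneg (hw0 p) (hχ0 _))
    rw [hKZ.tsum_eq] at hterm
    refine lt_of_lt_of_le ?_ hterm
    simp only [if_pos rfl]
    show (0:ℝ) < P ω₀ * P ω₀ * (ρ ω₀ * ρ ω₀).trace.re * 1
    have := trace_sq_pos (hρ ω₀)
    rw [mul_one]
    exact mul_pos (mul_pos hω₀ hω₀) this
  unfold renyiS2
  rw [neg_neg, Real.rpow_logb (by norm_num) (by norm_num) hXpos]
  exact main

end
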